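/- Let φ : ℝ → ℝ be C² with φ'(z₀) = 0 and 1 ≤ φ''(z) ≤ C for all z, and let a : ℝ → ℂ be C¹ with compact support. Then for all t ≠ 0, |∫ℝ e^{−itφ(z)} a(z) dz| ≲ ∫_{|z−z₀|<|t|^{−1/2}} |a(z)| dz + |t|^{−1} ∫_{|z−z₀|>|t|^{−1/2}} ( |a(z)|/|z−z₀|² + |a'(z)|/|z−z₀| ) dz, with implicit constant depending only on C. -/

import Mathlib

open MeasureTheory Real Set

set_option maxHeartbeats 2000000 in
/-- Stationary phase lemma: if φ' (z₀) = 0 and 1 ≤ φ'' ≤ C, then for t ≠ 0,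
    |∫ e^{−itφ(z)} a(z) dz| is bounded by the mass of a near the critical point plus
    |t|⁻¹ times weighted integrals away from it, with constant depending only on C. -/
theorem stationary_phase (C : ℝ) (hC : 1 ≤ C) :
    ∃ K : ℝ, 0 < K ∧
      ∀ (φ : ℝ → ℝ) (a : ℝ → ℂ) (z₀ t : ℝ), t ≠ 0 →
        ContDiff ℝ 2 φ →
        deriv φ z₀ = 0 →
        (∀ z, 1 ≤ deriv (deriv φ) z ∧ deriv (deriv φ) z ≤ C) →
        ContDiff ℝ 1 a → HasCompactSupport a →
        ‖∫ z : ℝ, Complex.exp (-Complex.I * t * φ z) * a z‖ ≤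
          K * ((∫ z in {z : ℝ | |z - z₀| < |t| ^ (-(1:ℝ)/2)}, ‖a z‖) +
            |t|⁻¹ * ∫ z in {z : ℝ | |z - z₀| > |t| ^ (-(1:ℝ)/2)},
              (‖a z‖ / |z - z₀| ^ 2 + ‖deriv a z‖ / |z - z₀|)) := by
  refine ⟨C + 4, by linarith, ?_⟩
  intro φ a z₀ t ht hφ hcrit hφ'' ha hsupp
  have hT : 0 < |t| := abs_pos.mpr ht
  set r : ℝ := |t| ^ (-(1:ℝ)/2) with hr_def
  have hr : 0 < r := Real.rpow_pos_of_pos hT _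
  have hrr : r * r * |t| = 1 := by
    rw [hr_def, ← Real.rpow_add hT]
    norm_num
    rw [Real.rpow_neg_one]
    field_simp
  have hs_eq : |t|⁻¹ = r * r := by
    field_simp
    nlinarith [hrr]
  -- basic smoothness facts
  have hφd : Differentiable ℝ φ := hφ.differentiable (by norm_num)
  have hφ1 : ContDiff ℝ 1 (deriv φ) :=
    (contDiff_succ_iff_deriv.mp (by exact_mod_cast hφ : ContDiff ℝ ((1:WithTop ℕ∞)+1) φ)).2.2
  set ψ : ℝ → ℝ := deriv φ with hψdef
  have hψd : Differentiable ℝ ψ := hφ1.differentiable one_ne_zero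
  have hψc : Continuous ψ := hψd.continuous
  have hψ'c : Continuous (deriv ψ) := hφ1.continuous_deriv le_rfl
  have had : Differentiable ℝ a := ha.differentiable one_ne_zero
  have hac : Continuous a := had.continuous
  have ha'c : Continuous (deriv a) := ha.continuous_deriv le_rfl
  -- signed bounds on ψ
  have hmono1 : Monotone (fun z => ψ z - z) := by
    apply monotone_of_deriv_nonneg (hψd.sub differentiable_id)
    intro x
    rw [(((hψd x).hasDerivAt).sub (hasDerivAt_id x)).deriv]
    have := (hφ'' x).1; linarith
  have hmono2 : Monotone (fun z => C * z - ψ z) := by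
    apply monotone_of_deriv_nonneg ((differentiable_id.const_mul C).sub hψd)
    intro x
    rw [(((hasDerivAt_id x).const_mul C).sub ((hψd x).hasDerivAt)).deriv]
    have := (hφ'' x).2; linarith
  have hsgn1 : ∀ z, z₀ ≤ z → z - z₀ ≤ ψ z ∧ ψ z ≤ C * (z - z₀) := by
    intro z hz
    have h1 : ψ z₀ - z₀ ≤ ψ z - z := hmono1 hz
    have h2 : C * z₀ - ψ z₀ ≤ C * z - ψ z := hmono2 hz
    rw [hcrit] at h1 h2
    constructor <;> linarith [mul_le_mul_of_nonneg_left hz (by linarith : (0:ℝ) ≤ C)]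
  have hsgn2 : ∀ z, z ≤ z₀ → C * (z - z₀) ≤ ψ z ∧ ψ z ≤ z - z₀ := by
    intro z hz
    have h1 : ψ z - z ≤ ψ z₀ - z₀ := hmono1 hz
    have h2 : C * z - ψ z ≤ C * z₀ - ψ z₀ := hmono2 hz
    rw [hcrit] at h1 h2
    constructor <;> linarith
  have hlow : ∀ z, |z - z₀| ≤ |ψ z| := by
    intro z
    rcases le_total z₀ z with hz | hz
    · obtain ⟨h1, _⟩ := hsgn1 z hz
      rw [abs_of_nonneg (by linarith : (0:ℝ) ≤ z - z₀), abs_of_nonneg (by linarith : (0:ℝ) ≤ ψ z)]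
      exact h1
    · obtain ⟨_, h2⟩ := hsgn2 z hz
      rw [abs_of_nonpos (by linarith : z - z₀ ≤ 0), abs_of_nonpos (by linarith : ψ z ≤ 0)]
      linarith
  have hup : ∀ z, |ψ z| ≤ C * |z - z₀| := by
    intro z
    rcases le_total z₀ z with hz | hz
    · obtain ⟨h1, h2⟩ := hsgn1 z hz
      rw [abs_of_nonneg (by linarith : (0:ℝ) ≤ z - z₀), abs_of_nonneg (by linarith : (0:ℝ) ≤ ψ z)]
      exact h2
    · obtain ⟨h1, h2⟩ := hsgn2 z hz
      rw [abs_of_nonpos (by linarith : z - z₀ ≤ 0), abs_of_nonpos (by nlinarith : ψ z ≤ 0)]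
      linarith
  have hψ_ne : ∀ z, z ≠ z₀ → ψ z ≠ 0 := by
    intro z hz h0
    have h := hlow z
    rw [h0, abs_zero] at h
    have : z - z₀ = 0 := abs_eq_zero.mp (le_antisymm h (abs_nonneg _))
    exact hz (by linarith)
-- support radius
  obtain ⟨R₀, hR₀⟩ := hsupp.isCompact.isBounded.subset_closedBall 0
  set R : ℝ := max R₀ 0 with hRdef
  have hR0 : 0 ≤ R := le_max_right _ _
  have hzero : ∀ x : ℝ, R < |x| → a x = 0 ∧ deriv a x = 0 := by
    intro x hx
    have hnot : x ∉ tsupport a := by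
      intro hmem
      have h1 := hR₀ hmem
      rw [Real.closedBall_eq_Icc] at h1
      have h2 : |x| ≤ R₀ := abs_le.mpr ⟨by linarith [h1.1], by linarith [h1.2]⟩
      have : |x| ≤ R := le_trans h2 (le_max_left _ _)
      linarith
    refine ⟨image_eq_zero_of_notMem_tsupport hnot, ?_⟩
    by_contra hd
    exact hnot (support_deriv_subset (Function.mem_support.mpr hd))
  set M : ℝ := R + |z₀| + 2*r + 1 with hMdef
  have hRM : R < M := by have := abs_nonneg z₀; linarith
  have hM0 : 0 < M := by have := abs_nonneg z₀; linarith
  set c : ℝ := z₀ + r with hcdef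
  set d : ℝ := z₀ - r with hddef
  have hdc : d < c := by simp only [hcdef, hddef]; linarith
  have hcz : z₀ < c := by simp only [hcdef]; linarith
  have hdz : d < z₀ := by simp only [hddef]; linarith
  have hMc : c + r ≤ M := by
    have h1 := le_abs_self z₀
    simp only [hcdef, hMdef]; linarith
  have hMd : -M ≤ d - r := by
    have h1 := neg_abs_le z₀
    simp only [hddef, hMdef]; linarith
  have haM : a M = 0 ∧ deriv a M = 0 := hzero M (by rw [abs_of_pos hM0]; exact hRM)
  have haM' : a (-M) = 0 ∧ deriv a (-M) = 0 := hzero (-M) (by rw [abs_neg, abs_of_pos hM0]; exact hRM)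
  -- main definitions
  set F : ℝ → ℂ := fun z => Complex.exp (-Complex.I * t * φ z) with hFdef
  set D : ℝ → ℂ := fun z => -Complex.I * t * (ψ z : ℂ) with hDdef
  set g : ℝ → ℂ := fun z => a z * (-Complex.I * (t:ℂ))⁻¹ * Complex.ofReal ((ψ z)⁻¹) with hgdef
  set g' : ℝ → ℂ := fun z =>
    deriv a z * (-Complex.I * (t:ℂ))⁻¹ * Complex.ofReal ((ψ z)⁻¹) +
      a z * (-Complex.I * (t:ℂ))⁻¹ * Complex.ofReal (-deriv ψ z / ψ z ^ 2) with hg'def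
  set B : ℝ → ℝ := fun z => ‖a z‖ / |z - z₀| ^ 2 + ‖deriv a z‖ / |z - z₀| with hBdef
  have hBnonneg : ∀ z, 0 ≤ B z := by
    intro z; simp only [hBdef]; positivity
  have hnormIT : ∀ u : ℝ, ‖-Complex.I * (t:ℂ) * (u:ℂ)‖ = |t| * |u| := by
    intro u
    rw [norm_mul, norm_mul, norm_neg, Complex.norm_I, Complex.norm_real, Complex.norm_real,
      Real.norm_eq_abs, Real.norm_eq_abs, one_mul]
  have hITne : (-Complex.I * (t:ℂ)) ≠ 0 :=
    mul_ne_zero (neg_ne_zero.mpr Complex.I_ne_zero) (Complex.ofReal_ne_zero.mpr ht)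
  have hITnorm : ‖(-Complex.I * (t:ℂ))⁻¹‖ = |t|⁻¹ := by
    rw [norm_inv, norm_mul, norm_neg, Complex.norm_I, Complex.norm_real, Real.norm_eq_abs,
      one_mul]
  have hFnorm : ∀ z, ‖F z‖ = 1 := by
    intro z
    simp only [hFdef]
    rw [Complex.norm_exp]
    norm_num [Complex.mul_re, Complex.mul_im]
  have hDnorm : ∀ z, ‖D z‖ = |t| * |ψ z| := fun z => hnormIT (ψ z)
  have hFc : Continuous F := by
    apply Complex.continuous_exp.comp
    exact continuous_const.mul (Complex.continuous_ofReal.comp hφd.continuous)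
  have hFderiv : ∀ z, HasDerivAt F (F z * D z) z := by
    intro z
    have h1 : HasDerivAt (fun z : ℝ => -Complex.I * (t:ℂ) * (φ z : ℂ)) (D z) z :=
      (((hφd z).hasDerivAt).ofReal_comp).const_mul _
    exact h1.cexp
  have hgderiv : ∀ x, x ≠ z₀ → HasDerivAt g (g' x) x := by
    intro x hx
    have h1 : HasDerivAt (fun z => a z * (-Complex.I * (t:ℂ))⁻¹)
        (deriv a x * (-Complex.I * (t:ℂ))⁻¹) x := ((had x).hasDerivAt).mul_const _
    have h2 : HasDerivAt (fun z : ℝ => (ψ z)⁻¹) (-deriv ψ x / ψ x ^ 2) x :=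
      ((hψd x).hasDerivAt).inv (hψ_ne x hx)
    have h3 : HasDerivAt (fun z : ℝ => Complex.ofReal ((ψ z)⁻¹))
        (Complex.ofReal (-deriv ψ x / ψ x ^ 2)) x := h2.ofReal_comp
    exact h1.mul h3
  have hFg : ∀ x, x ≠ z₀ → HasDerivAt (fun z => F z * g z) (F x * a x + F x * g' x) x := by
    intro x hx
    have h := (hFderiv x).mul (hgderiv x hx)
    have h2 : F x * D x * g x = F x * a x := by
      simp only [hgdef, hDdef, Complex.ofReal_inv]
      field_simp [Complex.I_ne_zero, Complex.ofReal_ne_zero.mpr ht,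
        Complex.ofReal_ne_zero.mpr (hψ_ne x hx)]
    rwa [h2] at h
  -- pointwise bound on g'
  have hg'_bound : ∀ x, x ≠ z₀ → ‖g' x‖ ≤ C * |t|⁻¹ * B x := by
    intro x hx
    have hA : 0 < |x - z₀| := abs_pos.mpr (sub_ne_zero.mpr hx)
    have hψx : 0 < |ψ x| := lt_of_lt_of_le hA (hlow x)
    have hψ''x : |deriv ψ x| ≤ C := by
      have h1 := (hφ'' x).1; have h2 := (hφ'' x).2
      rw [abs_of_nonneg (by linarith)]; exact h2
    have hQ0 : (0:ℝ) ≤ ‖deriv a x‖ := norm_nonneg _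
    have hP0 : (0:ℝ) ≤ ‖a x‖ := norm_nonneg _
    have hinv1 : |(ψ x)⁻¹| ≤ |x - z₀|⁻¹ := by
      rw [abs_inv]
      exact inv_anti₀ hA (hlow x)
    have hterm1 : ‖deriv a x‖ * |t|⁻¹ * |(ψ x)⁻¹| ≤ |t|⁻¹ * (‖deriv a x‖ / |x - z₀|) := by
      rw [div_eq_mul_inv]
      have h2 : ‖deriv a x‖ * |(ψ x)⁻¹| ≤ ‖deriv a x‖ * |x - z₀|⁻¹ :=
        mul_le_mul_of_nonneg_left hinv1 hQ0
      have h3 : (0:ℝ) ≤ |t|⁻¹ := by positivity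
      nlinarith [h2, h3]
    have hterm2 : ‖a x‖ * |t|⁻¹ * |(-deriv ψ x / ψ x ^ 2)| ≤
        C * |t|⁻¹ * (‖a x‖ / |x - z₀| ^ 2) := by
      have key : |(-deriv ψ x / ψ x ^ 2)| ≤ C / |x - z₀| ^ 2 := by
        rw [abs_div, abs_neg]
        have hsq : |ψ x ^ 2| = ψ x ^ 2 := abs_of_nonneg (by positivity)
        rw [hsq]
        apply div_le_div₀ (by linarith) hψ''x (by positivity)
        have h5 : |x - z₀| ^ 2 ≤ |ψ x| ^ 2 := by nlinarith [hlow x, hA]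
        nlinarith [sq_abs (ψ x)]
      calc ‖a x‖ * |t|⁻¹ * |(-deriv ψ x / ψ x ^ 2)|
          ≤ ‖a x‖ * |t|⁻¹ * (C / |x - z₀| ^ 2) := by
            apply mul_le_mul_of_nonneg_left key (by positivity)
        _ = C * |t|⁻¹ * (‖a x‖ / |x - z₀| ^ 2) := by ring
    have hfinal1 : |t|⁻¹ * (‖deriv a x‖ / |x - z₀|) ≤ C * (|t|⁻¹ * (‖deriv a x‖ / |x - z₀|)) :=
      le_mul_of_one_le_left (by positivity) hC
    calc ‖g' x‖ ≤ ‖deriv a x * (-Complex.I * (t:ℂ))⁻¹ * Complex.ofReal ((ψ x)⁻¹)‖ +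
        ‖a x * (-Complex.I * (t:ℂ))⁻¹ * Complex.ofReal (-deriv ψ x / ψ x ^ 2)‖ := norm_add_le _ _
      _ = ‖deriv a x‖ * |t|⁻¹ * |(ψ x)⁻¹| + ‖a x‖ * |t|⁻¹ * |(-deriv ψ x / ψ x ^ 2)| := by
          rw [norm_mul, norm_mul, norm_mul, norm_mul, hITnorm, Complex.norm_real,
            Complex.norm_real, Real.norm_eq_abs, Real.norm_eq_abs]
      _ ≤ |t|⁻¹ * (‖deriv a x‖ / |x - z₀|) + C * |t|⁻¹ * (‖a x‖ / |x - z₀| ^ 2) :=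
          add_le_add hterm1 hterm2
      _ ≤ C * |t|⁻¹ * B x := by
          simp only [hBdef, mul_add]
          have h4 : |t|⁻¹ * (‖deriv a x‖ / |x - z₀|) ≤
              C * |t|⁻¹ * (‖deriv a x‖ / |x - z₀|) := by
            rw [mul_assoc]; exact hfinal1
          linarith
  -- boundary values of g
  have hgval : ∀ x, r ≤ |x - z₀| → ‖g x‖ ≤ r * ‖a x‖ := by
    intro x hxr
    have hx : x ≠ z₀ := by
      intro h; rw [h] at hxr; simp at hxr; linarith
    have hA : 0 < |x - z₀| := abs_pos.mpr (sub_ne_zero.mpr hx)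
    have hψx : 0 < |ψ x| := lt_of_lt_of_le hA (hlow x)
    have hinv1 : |(ψ x)⁻¹| ≤ r⁻¹ := by
      rw [abs_inv]
      exact inv_anti₀ hr (le_trans hxr (hlow x))
    have hnorm : ‖g x‖ = ‖a x‖ * |t|⁻¹ * |(ψ x)⁻¹| := by
      rw [hgdef]
      rw [norm_mul, norm_mul, hITnorm, Complex.norm_real, Real.norm_eq_abs]
    rw [hnorm]
    have h1 : ‖a x‖ * |t|⁻¹ * |(ψ x)⁻¹| ≤ ‖a x‖ * |t|⁻¹ * r⁻¹ := by
      apply mul_le_mul_of_nonneg_left hinv1 (by positivity)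
    have h2 : |t|⁻¹ * r⁻¹ = r := by
      rw [hs_eq]
      field_simp
    nlinarith [h1, h2, norm_nonneg (a x)]
  -- continuity of g' away from z₀
  have hg'cont : ∀ s : Set ℝ, (∀ x ∈ s, x ≠ z₀) → ContinuousOn g' s := by
    intro s hs
    have hψinvc : ContinuousOn (fun z => ((ψ z)⁻¹ : ℝ)) s :=
      hψc.continuousOn.inv₀ (fun x hx => hψ_ne x (hs x hx))
    have h1 : ContinuousOn (fun z => (Complex.ofReal ((ψ z)⁻¹))) s :=
      Complex.continuous_ofReal.comp_continuousOn hψinvc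
    have h2 : ContinuousOn (fun z => Complex.ofReal (-deriv ψ z / ψ z ^ 2)) s := by
      apply Complex.continuous_ofReal.comp_continuousOn
      apply ContinuousOn.div (hψ'c.neg.continuousOn) ((hψc.pow 2).continuousOn)
      intro x hx; exact pow_ne_zero _ (hψ_ne x (hs x hx))
    exact ((ha'c.continuousOn.mul continuousOn_const).mul h1).add
      ((hac.continuousOn.mul continuousOn_const).mul h2)
  have hBcont : ∀ s : Set ℝ, (∀ x ∈ s, x ≠ z₀) → ContinuousOn B s := by
    intro s hs
    have habs : Continuous fun x : ℝ => |x - z₀| := (continuous_id.sub continuous_const).abs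
    have hne : ∀ x ∈ s, |x - z₀| ≠ 0 := fun x hx => abs_ne_zero.mpr (sub_ne_zero.mpr (hs x hx))
    apply ContinuousOn.add
    · exact ContinuousOn.div hac.norm.continuousOn ((habs.pow 2).continuousOn)
        (fun x hx => pow_ne_zero _ (hne x hx))
    · exact ContinuousOn.div ha'c.norm.continuousOn habs.continuousOn hne
  have hcM : c ≤ M := by linarith
  have hMd' : -M ≤ d := by linarith
  have hBIoi : IntegrableOn B (Ioi c) volume := by
    have h1 : IntegrableOn B (Ioc c M) volume := by
      apply ((hBcont (Icc c M) ?_).integrableOn_Icc).mono_set Ioc_subset_Icc_self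
      intro x hx; exact ne_of_gt (lt_of_lt_of_le hcz hx.1)
    have h2 : IntegrableOn B (Ioi M) volume := by
      refine (integrableOn_congr_fun (g := fun _ => (0:ℝ)) ?_ measurableSet_Ioi).mpr
        (integrableOn_zero)
      intro x hx
      have hx' : R < |x| := by
        rw [mem_Ioi] at hx
        rw [abs_of_pos (lt_trans hM0 hx)]
        linarith
      simp only [hBdef, (hzero x hx').1, (hzero x hx').2]
      simp
    have h3 := h1.union h2
    rwa [Ioc_union_Ioi_eq_Ioi hcM] at h3
  have hBIio : IntegrableOn B (Iio d) volume := by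
    have h1 : IntegrableOn B (Icc (-M) d) volume := by
      apply (hBcont (Icc (-M) d) ?_).integrableOn_Icc
      intro x hx; exact ne_of_lt (lt_of_le_of_lt hx.2 hdz)
    have h2 : IntegrableOn B (Iio (-M)) volume := by
      refine (integrableOn_congr_fun (g := fun _ => (0:ℝ)) ?_ measurableSet_Iio).mpr
        (integrableOn_zero)
      intro x hx
      rw [mem_Iio] at hx
      have hx' : R < |x| := by
        rw [abs_of_neg (by linarith)]
        linarith
      simp only [hBdef, (hzero x hx').1, (hzero x hx').2]
      simp
    have h3 := h2.union h1
    rw [Iio_union_Icc_eq_Iic hMd'] at h3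
    exact h3.mono_set Iio_subset_Iic_self
  have hFacont : Continuous fun x => F x * a x := hFc.mul hac
  have hIoiB_nonneg : (0:ℝ) ≤ ∫ x in Ioi c, B x := by
    apply setIntegral_nonneg measurableSet_Ioi (fun x _ => hBnonneg x)
  have hIioB_nonneg : (0:ℝ) ≤ ∫ x in Iio d, B x := by
    apply setIntegral_nonneg measurableSet_Iio (fun x _ => hBnonneg x)
  -- RIGHT piece
  have right : ‖∫ x in c..M, F x * a x‖ ≤ (C + 4) * |t|⁻¹ * ∫ x in Ioi c, B x := by
    have huIcc : uIcc c M = Icc c M := uIcc_of_le hcM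
    have hne : ∀ x ∈ uIcc c M, x ≠ z₀ := by
      rw [huIcc]; intro x hx; exact ne_of_gt (lt_of_lt_of_le hcz hx.1)
    have hg'contM : ContinuousOn g' (uIcc c M) := hg'cont _ hne
    have hint1 : IntervalIntegrable (fun x => F x * a x) volume c M :=
      hFacont.intervalIntegrable _ _
    have hint2 : IntervalIntegrable (fun x => F x * g' x) volume c M :=
      (hFc.continuousOn.mul hg'contM).intervalIntegrable
    have hIBP : ∫ x in c..M, (F x * a x + F x * g' x) = F M * g M - F c * g c :=
      intervalIntegral.integral_eq_sub_of_hasDerivAt (fun x hx => hFg x (hne x hx))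
        (hint1.add hint2)
    have hgM : g M = 0 := by simp [hgdef, haM.1]
    have hFa_eq : ∫ x in c..M, F x * a x = -(F c * g c) - ∫ x in c..M, F x * g' x := by
      have h := hIBP
      rw [intervalIntegral.integral_add hint1 hint2, hgM] at h
      rw [mul_zero, zero_sub] at h
      linear_combination h
    have hb1 : ‖F c * g c‖ ≤ r * ‖a c‖ := by
      rw [norm_mul, hFnorm, one_mul]
      apply hgval
      have : c - z₀ = r := by simp only [hcdef]; ring
      rw [this, abs_of_pos hr]
    have hcontIcc : ContinuousOn (fun x => F x * g' x) (Icc c M) := by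
      rw [← huIcc]; exact hFc.continuousOn.mul hg'contM
    have hb2 : ‖∫ x in c..M, F x * g' x‖ ≤ C * |t|⁻¹ * ∫ x in Ioi c, B x := by
      calc ‖∫ x in c..M, F x * g' x‖ ≤ ∫ x in c..M, ‖F x * g' x‖ :=
          intervalIntegral.norm_integral_le_integral_norm hcM
        _ = ∫ x in Ioc c M, ‖F x * g' x‖ := intervalIntegral.integral_of_le hcM
        _ ≤ ∫ x in Ioc c M, C * |t|⁻¹ * B x := by
            apply setIntegral_mono_on
            · exact (hcontIcc.norm.integrableOn_Icc).mono_set Ioc_subset_Icc_self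
            · exact (hBIoi.mono_set Ioc_subset_Ioi_self).const_mul _
            · exact measurableSet_Ioc
            · intro x hx
              rw [norm_mul, hFnorm, one_mul]
              exact hg'_bound x (ne_of_gt (lt_of_lt_of_le hcz hx.1.le))
        _ ≤ ∫ x in Ioi c, C * |t|⁻¹ * B x := by
            apply setIntegral_mono_set (hBIoi.const_mul _)
            · exact Filter.Eventually.of_forall fun x =>
                mul_nonneg (by positivity) (hBnonneg x)
            · exact HasSubset.Subset.eventuallyLE Ioc_subset_Ioi_self
        _ = C * |t|⁻¹ * ∫ x in Ioi c, B x := integral_const_mul _ _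
    have hbdry : r * ‖a c‖ ≤ 4 * |t|⁻¹ * ∫ x in Ioi c, B x := by
      set Q : ℝ := ∫ x in Ioo c (c+r), ‖deriv a x‖ with hQdef
      have hQint : IntegrableOn (fun x => ‖deriv a x‖) (Ioo c (c+r)) volume :=
        (ha'c.norm.integrableOn_Icc).mono_set Ioo_subset_Icc_self
      have hvol : (volume (Ioo c (c+r))).toReal = r := by
        rw [Real.volume_Ioo]
        rw [show c + r - c = r by ring]
        exact ENNReal.toReal_ofReal hr.le
      have hvol_fin : volume (Ioo c (c+r)) < ⊤ := by
        rw [Real.volume_Ioo]; exact ENNReal.ofReal_lt_top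
      have havg : ∀ z ∈ Ioo c (c+r), ‖a c‖ ≤ ‖a z‖ + Q := by
        intro z hz
        obtain ⟨hz1, hz2⟩ := hz
        have hczle : c ≤ z := hz1.le
        have hftc : ∫ x in c..z, deriv a x = a z - a c :=
          intervalIntegral.integral_deriv_eq_sub (fun x _ => had x)
            (ha'c.intervalIntegrable _ _)
        have h1 : ‖a c‖ ≤ ‖a z‖ + ‖a z - a c‖ := by
          calc ‖a c‖ = ‖a z - (a z - a c)‖ := by ring_nf
            _ ≤ ‖a z‖ + ‖a z - a c‖ := norm_sub_le _ _
        have h2 : ‖a z - a c‖ ≤ Q := by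
          rw [← hftc]
          calc ‖∫ x in c..z, deriv a x‖ ≤ ∫ x in c..z, ‖deriv a x‖ :=
              intervalIntegral.norm_integral_le_integral_norm hczle
            _ = ∫ x in Ioc c z, ‖deriv a x‖ := intervalIntegral.integral_of_le hczle
            _ ≤ Q := by
                rw [hQdef]
                apply setIntegral_mono_set hQint
                  (Filter.Eventually.of_forall fun x => norm_nonneg _)
                exact HasSubset.Subset.eventuallyLE
                  (fun x hx => ⟨hx.1, lt_of_le_of_lt hx.2 hz2⟩)
        linarith
      have hconst_int : IntegrableOn (fun _ : ℝ => ‖a c‖) (Ioo c (c+r)) volume :=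
        (integrableOn_const_iff).mpr (Or.inr hvol_fin)
      have hQconst_int : IntegrableOn (fun _ : ℝ => Q) (Ioo c (c+r)) volume :=
        (integrableOn_const_iff).mpr (Or.inr hvol_fin)
      have haint : IntegrableOn (fun z => ‖a z‖) (Ioo c (c+r)) volume :=
        (hac.norm.integrableOn_Icc).mono_set Ioo_subset_Icc_self
      have h3 : r * ‖a c‖ ≤ ∫ z in Ioo c (c+r), (‖a z‖ + Q) := by
        have hc0 : ∫ _ in Ioo c (c+r), ‖a c‖ = r * ‖a c‖ := by
          rw [setIntegral_const, measureReal_def, hvol, smul_eq_mul]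
        rw [← hc0]
        exact setIntegral_mono_on hconst_int (haint.add hQconst_int) measurableSet_Ioo havg
      have h4 : ∫ z in Ioo c (c+r), (‖a z‖ + Q) =
          ∫ z in Ioo c (c+r), (‖a z‖ + r * ‖deriv a z‖) := by
        rw [integral_add haint hQconst_int, integral_add haint (hQint.const_mul r)]
        congr 1
        rw [setIntegral_const, measureReal_def, hvol, smul_eq_mul, hQdef, ← integral_const_mul]
      have h6 : ∫ z in Ioo c (c+r), (‖a z‖ + r * ‖deriv a z‖) ≤
          ∫ z in Ioo c (c+r), 4 * |t|⁻¹ * B z := by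
        apply setIntegral_mono_on (haint.add (hQint.const_mul r))
          ((hBIoi.mono_set (fun x hx => hx.1)).const_mul _) measurableSet_Ioo
        intro z hz
        obtain ⟨hz1, hz2⟩ := hz
        have hA1 : r < z - z₀ := by simp only [hcdef] at hz1; linarith
        have hA2 : z - z₀ < 2 * r := by simp only [hcdef] at hz2; linarith
        have hApos : (0:ℝ) < z - z₀ := by linarith
        have hAabs : |z - z₀| = z - z₀ := abs_of_pos hApos
        simp only [hBdef, hAabs, hs_eq]
        have hp : (0:ℝ) ≤ ‖a z‖ / (z - z₀) ^ 2 := by positivity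
        have hq : (0:ℝ) ≤ ‖deriv a z‖ / (z - z₀) := by positivity
        have k1 : ‖a z‖ ≤ ‖a z‖ / (z - z₀) ^ 2 * (4 * (r * r)) := by
          calc ‖a z‖ = ‖a z‖ / (z - z₀) ^ 2 * (z - z₀) ^ 2 :=
              (div_mul_cancel₀ _ (by positivity)).symm
            _ ≤ ‖a z‖ / (z - z₀) ^ 2 * (4 * (r * r)) :=
              mul_le_mul_of_nonneg_left (by nlinarith) hp
        have k2 : r * ‖deriv a z‖ ≤ ‖deriv a z‖ / (z - z₀) * (2 * (r * r)) := by
          rw [div_mul_eq_mul_div, le_div_iff₀ hApos]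
          nlinarith [mul_le_mul_of_nonneg_left hA2.le
            (mul_nonneg hr.le (norm_nonneg (deriv a z)))]
        simp only [Pi.add_apply]
        nlinarith [k1, k2, hp, hq, mul_nonneg hr.le hr.le,
          mul_nonneg hq (mul_nonneg hr.le hr.le)]
      have h7 : ∫ z in Ioo c (c+r), 4 * |t|⁻¹ * B z ≤ 4 * |t|⁻¹ * ∫ x in Ioi c, B x := by
        rw [← integral_const_mul]
        apply setIntegral_mono_set (hBIoi.const_mul _)
          (Filter.Eventually.of_forall fun x => mul_nonneg (by positivity) (hBnonneg x))
          (HasSubset.Subset.eventuallyLE (fun x hx => hx.1))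
      linarith
    calc ‖∫ x in c..M, F x * a x‖
        = ‖-(F c * g c) - ∫ x in c..M, F x * g' x‖ := by rw [hFa_eq]
      _ ≤ ‖F c * g c‖ + ‖∫ x in c..M, F x * g' x‖ := by
          have h := norm_sub_le (-(F c * g c)) (∫ x in c..M, F x * g' x)
          simpa using h
      _ ≤ (r * ‖a c‖) + (C * |t|⁻¹ * ∫ x in Ioi c, B x) := add_le_add hb1 hb2
      _ ≤ (4 * |t|⁻¹ * ∫ x in Ioi c, B x) + (C * |t|⁻¹ * ∫ x in Ioi c, B x) := by
          linarith [hbdry]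
      _ = (C + 4) * |t|⁻¹ * ∫ x in Ioi c, B x := by ring
  -- LEFT piece
  have left : ‖∫ x in (-M)..d, F x * a x‖ ≤ (C + 4) * |t|⁻¹ * ∫ x in Iio d, B x := by
    have huIcc : uIcc (-M) d = Icc (-M) d := uIcc_of_le hMd'
    have hne : ∀ x ∈ uIcc (-M) d, x ≠ z₀ := by
      rw [huIcc]; intro x hx; exact ne_of_lt (lt_of_le_of_lt hx.2 hdz)
    have hg'contM : ContinuousOn g' (uIcc (-M) d) := hg'cont _ hne
    have hint1 : IntervalIntegrable (fun x => F x * a x) volume (-M) d :=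
      hFacont.intervalIntegrable _ _
    have hint2 : IntervalIntegrable (fun x => F x * g' x) volume (-M) d :=
      (hFc.continuousOn.mul hg'contM).intervalIntegrable
    have hIBP : ∫ x in (-M)..d, (F x * a x + F x * g' x) = F d * g d - F (-M) * g (-M) :=
      intervalIntegral.integral_eq_sub_of_hasDerivAt (fun x hx => hFg x (hne x hx))
        (hint1.add hint2)
    have hgM : g (-M) = 0 := by simp [hgdef, haM'.1]
    have hFa_eq : ∫ x in (-M)..d, F x * a x =
        (F d * g d) - ∫ x in (-M)..d, F x * g' x := by
      have h := hIBP
      rw [intervalIntegral.integral_add hint1 hint2, hgM] at h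
      rw [mul_zero, sub_zero] at h
      linear_combination h
    have hb1 : ‖F d * g d‖ ≤ r * ‖a d‖ := by
      rw [norm_mul, hFnorm, one_mul]
      apply hgval
      have hdz0 : d - z₀ = -r := by simp only [hddef]; ring
      rw [hdz0, abs_neg, abs_of_pos hr]
    have hcontIcc : ContinuousOn (fun x => F x * g' x) (Icc (-M) d) := by
      rw [← huIcc]; exact hFc.continuousOn.mul hg'contM
    have hBIocInt : IntegrableOn B (Ioc (-M) d) volume := by
      apply ((hBcont (Icc (-M) d) ?_).integrableOn_Icc).mono_set Ioc_subset_Icc_self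
      intro x hx; exact ne_of_lt (lt_of_le_of_lt hx.2 hdz)
    have hb2 : ‖∫ x in (-M)..d, F x * g' x‖ ≤ C * |t|⁻¹ * ∫ x in Iio d, B x := by
      have step1 : ∫ x in Ioc (-M) d, C * |t|⁻¹ * B x ≤ ∫ x in Iio d, C * |t|⁻¹ * B x := by
        rw [integral_Ioc_eq_integral_Ioo]
        apply setIntegral_mono_set (hBIio.const_mul _)
          (Filter.Eventually.of_forall fun x => mul_nonneg (by positivity) (hBnonneg x))
          (HasSubset.Subset.eventuallyLE (fun x hx => hx.2))
      calc ‖∫ x in (-M)..d, F x * g' x‖ ≤ ∫ x in (-M)..d, ‖F x * g' x‖ :=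
          intervalIntegral.norm_integral_le_integral_norm hMd'
        _ = ∫ x in Ioc (-M) d, ‖F x * g' x‖ := intervalIntegral.integral_of_le hMd'
        _ ≤ ∫ x in Ioc (-M) d, C * |t|⁻¹ * B x := by
            apply setIntegral_mono_on
            · exact (hcontIcc.norm.integrableOn_Icc).mono_set Ioc_subset_Icc_self
            · exact hBIocInt.const_mul _
            · exact measurableSet_Ioc
            · intro x hx
              rw [norm_mul, hFnorm, one_mul]
              exact hg'_bound x (ne_of_lt (lt_of_le_of_lt hx.2 hdz))
        _ ≤ ∫ x in Iio d, C * |t|⁻¹ * B x := step1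
        _ = C * |t|⁻¹ * ∫ x in Iio d, B x := integral_const_mul _ _
    have hbdry : r * ‖a d‖ ≤ 4 * |t|⁻¹ * ∫ x in Iio d, B x := by
      set Q : ℝ := ∫ x in Ioo (d - r) d, ‖deriv a x‖ with hQdef
      have hQint : IntegrableOn (fun x => ‖deriv a x‖) (Ioo (d - r) d) volume :=
        (ha'c.norm.integrableOn_Icc).mono_set Ioo_subset_Icc_self
      have hvol : (volume (Ioo (d - r) d)).toReal = r := by
        rw [Real.volume_Ioo, show d - (d - r) = r by ring]
        exact ENNReal.toReal_ofReal hr.le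
      have hvol_fin : volume (Ioo (d - r) d) < ⊤ := by
        rw [Real.volume_Ioo]; exact ENNReal.ofReal_lt_top
      have havg : ∀ z ∈ Ioo (d - r) d, ‖a d‖ ≤ ‖a z‖ + Q := by
        intro z hz
        obtain ⟨hz1, hz2⟩ := hz
        have hzd : z ≤ d := hz2.le
        have hftc : ∫ x in z..d, deriv a x = a d - a z :=
          intervalIntegral.integral_deriv_eq_sub (fun x _ => had x)
            (ha'c.intervalIntegrable _ _)
        have h1 : ‖a d‖ ≤ ‖a z‖ + ‖a d - a z‖ := by
          calc ‖a d‖ = ‖a z + (a d - a z)‖ := by ring_nf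
            _ ≤ ‖a z‖ + ‖a d - a z‖ := norm_add_le _ _
        have h2 : ‖a d - a z‖ ≤ Q := by
          rw [← hftc]
          calc ‖∫ x in z..d, deriv a x‖ ≤ ∫ x in z..d, ‖deriv a x‖ :=
              intervalIntegral.norm_integral_le_integral_norm hzd
            _ = ∫ x in Ioc z d, ‖deriv a x‖ := intervalIntegral.integral_of_le hzd
            _ = ∫ x in Ioo z d, ‖deriv a x‖ := integral_Ioc_eq_integral_Ioo
            _ ≤ Q := by
                rw [hQdef]
                apply setIntegral_mono_set hQint
                  (Filter.Eventually.of_forall fun x => norm_nonneg _)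
                exact HasSubset.Subset.eventuallyLE
                  (fun x hx => ⟨lt_trans hz1 hx.1, hx.2⟩)
        linarith
      have hconst_int : IntegrableOn (fun _ : ℝ => ‖a d‖) (Ioo (d - r) d) volume :=
        (integrableOn_const_iff).mpr (Or.inr hvol_fin)
      have hQconst_int : IntegrableOn (fun _ : ℝ => Q) (Ioo (d - r) d) volume :=
        (integrableOn_const_iff).mpr (Or.inr hvol_fin)
      have haint : IntegrableOn (fun z => ‖a z‖) (Ioo (d - r) d) volume :=
        (hac.norm.integrableOn_Icc).mono_set Ioo_subset_Icc_self
      have h3 : r * ‖a d‖ ≤ ∫ z in Ioo (d - r) d, (‖a z‖ + Q) := by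
        have hc0 : ∫ _ in Ioo (d - r) d, ‖a d‖ = r * ‖a d‖ := by
          rw [setIntegral_const, measureReal_def, hvol, smul_eq_mul]
        rw [← hc0]
        exact setIntegral_mono_on hconst_int (haint.add hQconst_int) measurableSet_Ioo havg
      have h4 : ∫ z in Ioo (d - r) d, (‖a z‖ + Q) =
          ∫ z in Ioo (d - r) d, (‖a z‖ + r * ‖deriv a z‖) := by
        rw [integral_add haint hQconst_int, integral_add haint (hQint.const_mul r)]
        congr 1
        rw [setIntegral_const, measureReal_def, hvol, smul_eq_mul, hQdef, ← integral_const_mul]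
      have h6 : ∫ z in Ioo (d - r) d, (‖a z‖ + r * ‖deriv a z‖) ≤
          ∫ z in Ioo (d - r) d, 4 * |t|⁻¹ * B z := by
        apply setIntegral_mono_on (haint.add (hQint.const_mul r))
          ((hBIio.mono_set (fun x hx => hx.2)).const_mul _) measurableSet_Ioo
        intro z hz
        obtain ⟨hz1, hz2⟩ := hz
        have hA1 : r < z₀ - z := by simp only [hddef] at hz2; linarith
        have hA2 : z₀ - z < 2 * r := by simp only [hddef] at hz1; linarith
        have hApos : (0:ℝ) < z₀ - z := by linarith
        have hAabs : |z - z₀| = z₀ - z := by rw [abs_sub_comm]; exact abs_of_pos hApos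
        simp only [hBdef, hAabs, hs_eq]
        have hp : (0:ℝ) ≤ ‖a z‖ / (z₀ - z) ^ 2 := by positivity
        have hq : (0:ℝ) ≤ ‖deriv a z‖ / (z₀ - z) := by positivity
        have k1 : ‖a z‖ ≤ ‖a z‖ / (z₀ - z) ^ 2 * (4 * (r * r)) := by
          calc ‖a z‖ = ‖a z‖ / (z₀ - z) ^ 2 * (z₀ - z) ^ 2 :=
              (div_mul_cancel₀ _ (by positivity)).symm
            _ ≤ ‖a z‖ / (z₀ - z) ^ 2 * (4 * (r * r)) :=
              mul_le_mul_of_nonneg_left (by nlinarith) hp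
        have k2 : r * ‖deriv a z‖ ≤ ‖deriv a z‖ / (z₀ - z) * (2 * (r * r)) := by
          rw [div_mul_eq_mul_div, le_div_iff₀ hApos]
          nlinarith [mul_le_mul_of_nonneg_left hA2.le
            (mul_nonneg hr.le (norm_nonneg (deriv a z)))]
        simp only [Pi.add_apply]
        nlinarith [k1, k2, hp, hq, mul_nonneg hr.le hr.le,
          mul_nonneg hq (mul_nonneg hr.le hr.le)]
      have h7 : ∫ z in Ioo (d - r) d, 4 * |t|⁻¹ * B z ≤ 4 * |t|⁻¹ * ∫ x in Iio d, B x := by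
        rw [← integral_const_mul]
        apply setIntegral_mono_set (hBIio.const_mul _)
          (Filter.Eventually.of_forall fun x => mul_nonneg (by positivity) (hBnonneg x))
          (HasSubset.Subset.eventuallyLE (fun x hx => hx.2))
      linarith
    calc ‖∫ x in (-M)..d, F x * a x‖
        = ‖(F d * g d) - ∫ x in (-M)..d, F x * g' x‖ := by rw [hFa_eq]
      _ ≤ ‖F d * g d‖ + ‖∫ x in (-M)..d, F x * g' x‖ := norm_sub_le _ _
      _ ≤ (r * ‖a d‖) + (C * |t|⁻¹ * ∫ x in Iio d, B x) := add_le_add hb1 hb2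
      _ ≤ (4 * |t|⁻¹ * ∫ x in Iio d, B x) + (C * |t|⁻¹ * ∫ x in Iio d, B x) := by
          linarith [hbdry]
      _ = (C + 4) * |t|⁻¹ * ∫ x in Iio d, B x := by ring
  -- assembly
  have hsplit : ∫ z : ℝ, F z * a z =
      (∫ x in (-M)..d, F x * a x) + ((∫ x in d..c, F x * a x) +
        ∫ x in c..M, F x * a x) := by
    have h1 : ∫ z : ℝ, F z * a z = ∫ x in Ioc (-M) M, F x * a x := by
      symm
      apply setIntegral_eq_integral_of_forall_compl_eq_zero
      intro x hx
      simp only [mem_Ioc, not_and_or, not_lt, not_le] at hx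
      have hx' : R < |x| := by
        rcases hx with h | h
        · rw [abs_of_neg (by linarith : x < 0)]; linarith
        · rw [abs_of_pos (by linarith : (0:ℝ) < x)]; linarith
      rw [(hzero x hx').1, mul_zero]
    rw [h1, ← intervalIntegral.integral_of_le (by linarith : -M ≤ M),
      ← intervalIntegral.integral_add_adjacent_intervals (a := -M) (b := d) (c := M)
        (hFacont.intervalIntegrable _ _) (hFacont.intervalIntegrable _ _),
      ← intervalIntegral.integral_add_adjacent_intervals (a := d) (b := c) (c := M)
        (hFacont.intervalIntegrable _ _) (hFacont.intervalIntegrable _ _)]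
  have hnear : ‖∫ x in d..c, F x * a x‖ ≤ ∫ z in Ioo d c, ‖a z‖ := by
    calc ‖∫ x in d..c, F x * a x‖ ≤ ∫ x in d..c, ‖F x * a x‖ :=
        intervalIntegral.norm_integral_le_integral_norm hdc.le
      _ = ∫ x in d..c, ‖a x‖ := by
          apply intervalIntegral.integral_congr
          intro x _
          show ‖F x * a x‖ = ‖a x‖
          rw [norm_mul, hFnorm, one_mul]
      _ = ∫ x in Ioc d c, ‖a x‖ := intervalIntegral.integral_of_le hdc.le
      _ = ∫ x in Ioo d c, ‖a x‖ := integral_Ioc_eq_integral_Ioo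
  have hnear_set : {z : ℝ | |z - z₀| < r} = Ioo d c := by
    ext z
    simp only [mem_setOf_eq, mem_Ioo, abs_lt, hddef, hcdef]
    constructor
    · rintro ⟨h1, h2⟩; constructor <;> linarith
    · rintro ⟨h1, h2⟩; constructor <;> linarith
  have hfar_set : {z : ℝ | |z - z₀| > r} = Iio d ∪ Ioi c := by
    ext z
    simp only [mem_setOf_eq, mem_union, mem_Iio, mem_Ioi, hddef, hcdef, gt_iff_lt, lt_abs]
    constructor
    · rintro (h | h)
      · right; linarith
      · left; linarith
    · rintro (h | h)
      · right; linarith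
      · left; linarith
  have hfar_int : ∫ z in {z : ℝ | |z - z₀| > r}, B z =
      (∫ x in Iio d, B x) + ∫ x in Ioi c, B x := by
    rw [hfar_set]
    apply setIntegral_union ?_ measurableSet_Ioi hBIio hBIoi
    rw [Set.disjoint_left]
    intro x h1 h2
    simp only [mem_Iio] at h1
    simp only [mem_Ioi] at h2
    linarith
  have hnear_nonneg : 0 ≤ ∫ z in Ioo d c, ‖a z‖ :=
    setIntegral_nonneg measurableSet_Ioo (fun x _ => norm_nonneg _)
  have final : ‖∫ z : ℝ, F z * a z‖ ≤
      (C + 4) * ((∫ z in {z : ℝ | |z - z₀| < r}, ‖a z‖) +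
        |t|⁻¹ * ∫ z in {z : ℝ | |z - z₀| > r}, B z) := by
    rw [hsplit, hnear_set, hfar_int]
    have htri : ‖(∫ x in (-M)..d, F x * a x) + ((∫ x in d..c, F x * a x) +
        ∫ x in c..M, F x * a x)‖ ≤ ‖∫ x in (-M)..d, F x * a x‖ +
        (‖∫ x in d..c, F x * a x‖ + ‖∫ x in c..M, F x * a x‖) :=
      le_trans (norm_add_le _ _) (add_le_add le_rfl (norm_add_le _ _))
    have h1 := le_trans htri (add_le_add left (add_le_add hnear right))
    have hti : (0:ℝ) ≤ |t|⁻¹ := by positivity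
    nlinarith [h1, hnear_nonneg, hC, hIoiB_nonneg, hIioB_nonneg,
      mul_nonneg hti hIoiB_nonneg, mul_nonneg hti hIioB_nonneg]
  exact final
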